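/- (Oblique Subspace Pursuit, Step 2.) Let Ψ, Ψ̃ ∈ K^{m×n}, let x* ∈ K^n be s-sparse with support J*, let z ∈ K^m and y = Ψx* + z. Let J̃ ⊆ {1,…,n} with s ≤ |J̃| ≤ 2s, assume θ := θ_{3s}(Ψ̃*Ψ) < 1, and set δ̃ := δ_{2s}(Ψ̃). Let x̃ be the (unique) vector supported on J̃ with Ψ̃_{J̃}*(y − Ψx̃) = 0, and let J₁ ⊆ J̃ with |J₁| = s satisfy min_{j∈J₁}|x̃_j| ≥ max_{j∈J̃\J₁}|x̃_j| (J₁ indexes s largest-magnitude entries of x̃). Then ‖Π_{J*\J₁}x*‖₂ ≤ ((1+θ)/(1−θ))·‖Π_{J*\J̃}x*‖₂ + (2·√(1+δ̃)/(1−θ))·‖z‖₂. -/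

import Mathlib

open scoped BigOperators
open Matrix MeasureTheory

noncomputable section

namespace ObliquePursuit

variable {𝕜 : Type*} [RCLike 𝕜]

/-- The Euclidean (`ℓ²`) norm of a finitely indexed vector. -/
def l2 {ι : Type*} [Fintype ι] (x : ι → 𝕜) : ℝ :=
  Real.sqrt (∑ i, ‖x i‖ ^ 2)

/-- The spectral (`ℓ² → ℓ²` operator) norm of a matrix. -/
def specNorm {ι κ : Type*} [Fintype ι] [Fintype κ] [DecidableEq κ]
    (M : Matrix ι κ 𝕜) : ℝ :=
  ‖LinearMap.toContinuousLinearMap (Matrix.toEuclideanLin M)‖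

/-- `x` is `s`-sparse: it has at most `s` nonzero entries. -/
def Sparse {ι : Type*} (s : ℕ) (x : ι → 𝕜) : Prop :=
  ∃ J : Finset ι, J.card ≤ s ∧ ∀ i, x i ≠ 0 → i ∈ J

/-- The `s`-restricted biorthogonality constant `θ_s(M)`: the smallest `δ ≥ 0` such that
`|⟨y, Mx⟩ − ⟨y, x⟩| ≤ δ‖x‖₂‖y‖₂` for all `x, y` supported on a common index set of
cardinality at most `s`. -/
def theta {ι : Type*} [Fintype ι] (s : ℕ) (M : Matrix ι ι 𝕜) : ℝ :=
  sInf {δ : ℝ | 0 ≤ δ ∧ ∀ J : Finset ι, J.card ≤ s →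
    ∀ x y : ι → 𝕜, (∀ i, x i ≠ 0 → i ∈ J) → (∀ i, y i ≠ 0 → i ∈ J) →
      ‖star y ⬝ᵥ M.mulVec x - star y ⬝ᵥ x‖ ≤ δ * l2 x * l2 y}

/-- The `s`-restricted isometry constant `δ_s(Ψ)`. -/
def ric {ι κ : Type*} [Fintype ι] [Fintype κ] (s : ℕ) (Ψ : Matrix ι κ 𝕜) : ℝ :=
  sInf {δ : ℝ | 0 ≤ δ ∧ ∀ x : κ → 𝕜, Sparse s x →
    (1 - δ) * l2 x ^ 2 ≤ l2 (Ψ.mulVec x) ^ 2 ∧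
      l2 (Ψ.mulVec x) ^ 2 ≤ (1 + δ) * l2 x ^ 2}

/-- Coordinate projection `Π_J`: keep the entries indexed by `J`, zero out the others. -/
def proj {ι : Type*} [DecidableEq ι] (J : Finset ι) (x : ι → 𝕜) : ι → 𝕜 :=
  fun i => if i ∈ J then x i else 0

/-- The column submatrix `Ψ_J` of `Ψ` formed by the columns indexed by `J`. -/
def cols {ι κ : Type*} (Ψ : Matrix ι κ 𝕜) (J : Finset κ) :
    Matrix ι {j // j ∈ J} 𝕜 :=
  Ψ.submatrix id fun j => (j : κ)

/-- The `j`-th column of `Ψ`. -/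
def col {ι κ : Type*} (Ψ : Matrix ι κ 𝕜) (j : κ) : ι → 𝕜 :=
  fun i => Ψ i j

/-- The complementary oblique projector `E = I − Ψ_J (Ψ̃_J^* Ψ_J)⁻¹ Ψ̃_J^*`
(equal to `I` when `J = ∅`). -/
def obliqueE {ι κ : Type*} [Fintype ι] [DecidableEq ι] [DecidableEq κ]
    (Ψ Ψt : Matrix ι κ 𝕜) (J : Finset κ) : Matrix ι ι 𝕜 :=
  1 - cols Ψ J * ((cols Ψt J)ᴴ * cols Ψ J)⁻¹ * (cols Ψt J)ᴴ

/-- The smallest (real) eigenvalue of a matrix. -/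
def lamMin {ι : Type*} [Fintype ι] (G : Matrix ι ι 𝕜) : ℝ :=
  sInf {r : ℝ | ∃ v : ι → 𝕜, v ≠ 0 ∧ G.mulVec v = (r : 𝕜) • v}

/-- The `j`-th largest singular value (1-indexed) of a matrix, characterized via the
Eckart–Young–Mirsky theorem: `σ_j(A) = min { ‖A − B‖ : rank B < j }` where `‖·‖` is the
spectral norm. -/
def singVal {ι κ : Type*} [Fintype ι] [Fintype κ] [DecidableEq κ]
    (A : Matrix ι κ 𝕜) (j : ℕ) : ℝ :=
  sInf {r : ℝ | ∃ B : Matrix ι κ 𝕜, B.rank < j ∧ r = specNorm (A - B)}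

/-! ### auxiliary lemmas -/

section Aux

variable {ι κ : Type*} [Fintype ι] [Fintype κ]

def toE (x : ι → 𝕜) : EuclideanSpace 𝕜 ι := (WithLp.equiv 2 (ι → 𝕜)).symm x

lemma l2_nonneg (x : ι → 𝕜) : 0 ≤ l2 x := Real.sqrt_nonneg _

lemma l2_sq (x : ι → 𝕜) : l2 x ^ 2 = ∑ i, ‖x i‖ ^ 2 :=
  Real.sq_sqrt (Finset.sum_nonneg fun i _ => sq_nonneg _)

lemma l2_eq_norm (x : ι → 𝕜) : l2 x = ‖toE x‖ := by
  rw [EuclideanSpace.norm_eq]; rfl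

lemma l2_add_le (x y : ι → 𝕜) : l2 (x + y) ≤ l2 x + l2 y := by
  simpa [l2_eq_norm, toE] using norm_add_le (toE x) (toE y)

lemma dot_eq_inner (x y : ι → 𝕜) : star y ⬝ᵥ x = (inner 𝕜 (toE y) (toE x) : 𝕜) := by
  simp [dotProduct, PiLp.inner_apply, RCLike.inner_apply, toE,
    mul_comm]

lemma norm_dot_le (x y : ι → 𝕜) : ‖star y ⬝ᵥ x‖ ≤ l2 y * l2 x := by
  rw [dot_eq_inner, l2_eq_norm, l2_eq_norm]
  exact norm_inner_le_norm _ _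

lemma norm_dot_self (x : ι → 𝕜) : ‖star x ⬝ᵥ x‖ = l2 x ^ 2 := by
  rw [dot_eq_inner, inner_self_eq_norm_sq_to_K, l2_eq_norm]
  rw [← RCLike.ofReal_pow, RCLike.norm_ofReal, abs_of_nonneg (by positivity)]

lemma l2_mono {x y : ι → 𝕜} (h : ∀ i, ‖x i‖ ≤ ‖y i‖) : l2 x ≤ l2 y := by
  apply Real.sqrt_le_sqrt
  exact Finset.sum_le_sum fun i _ => by
    have := h i; nlinarith [norm_nonneg (x i)]

/-- Frobenius-type bound. -/
lemma l2_mulVec_le (M : Matrix ι κ 𝕜) (x : κ → 𝕜) :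
    l2 (M.mulVec x) ≤ Real.sqrt (∑ i, ∑ j, ‖M i j‖ ^ 2) * l2 x := by
  have key : l2 (M.mulVec x) ^ 2 ≤ (∑ i, ∑ j, ‖M i j‖ ^ 2) * l2 x ^ 2 := by
    rw [l2_sq, l2_sq, Finset.sum_mul]
    apply Finset.sum_le_sum
    intro i _
    have h1 : ‖M.mulVec x i‖ ≤ ∑ j, ‖M i j‖ * ‖x j‖ := by
      simpa [Matrix.mulVec, dotProduct] using
        norm_sum_le Finset.univ (fun j => M i j * x j)
    calc ‖M.mulVec x i‖ ^ 2 ≤ (∑ j, ‖M i j‖ * ‖x j‖) ^ 2 := by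
          have := norm_nonneg (M.mulVec x i); nlinarith
      _ ≤ (∑ j, ‖M i j‖ ^ 2) * ∑ j, ‖x j‖ ^ 2 :=
          Finset.sum_mul_sq_le_sq_mul_sq _ _ _
  calc l2 (M.mulVec x) = Real.sqrt (l2 (M.mulVec x) ^ 2) :=
        (Real.sqrt_sq (l2_nonneg _)).symm
    _ ≤ Real.sqrt ((∑ i, ∑ j, ‖M i j‖ ^ 2) * l2 x ^ 2) := Real.sqrt_le_sqrt key
    _ = Real.sqrt (∑ i, ∑ j, ‖M i j‖ ^ 2) * l2 x := by
        rw [Real.sqrt_mul (by positivity), Real.sqrt_sq (l2_nonneg _)]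

lemma le_sInf_mul {S : Set ℝ} (hS : S.Nonempty) {a c : ℝ} (hc : 0 ≤ c)
    (h : ∀ δ ∈ S, a ≤ δ * c) : a ≤ sInf S * c := by
  rcases hc.eq_or_lt with h0 | h0
  · obtain ⟨δ, hδ⟩ := hS
    have := h δ hδ
    rw [← h0] at this ⊢
    simpa using this
  · have h1 : a / c ≤ sInf S :=
      le_csInf hS fun δ hδ => (div_le_iff₀ h0).2 (h δ hδ)
    calc a = a / c * c := by field_simp
      _ ≤ sInf S * c := mul_le_mul_of_nonneg_right h1 hc

/-! ### spec lemmas for theta & ric -/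

lemma theta_nonneg (s : ℕ) (M : Matrix ι ι 𝕜) : 0 ≤ theta s M :=
  Real.sInf_nonneg fun _ hδ => hδ.1

lemma theta_set_nonempty (s : ℕ) (M : Matrix ι ι 𝕜) :
    {δ : ℝ | 0 ≤ δ ∧ ∀ J : Finset ι, J.card ≤ s →
      ∀ x y : ι → 𝕜, (∀ i, x i ≠ 0 → i ∈ J) → (∀ i, y i ≠ 0 → i ∈ J) →
        ‖star y ⬝ᵥ M.mulVec x - star y ⬝ᵥ x‖ ≤ δ * l2 x * l2 y}.Nonempty := by
  refine ⟨Real.sqrt (∑ i, ∑ j, ‖M i j‖ ^ 2) + 1, by positivity, ?_⟩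
  intro J _ x y _ _
  calc ‖star y ⬝ᵥ M.mulVec x - star y ⬝ᵥ x‖
      ≤ ‖star y ⬝ᵥ M.mulVec x‖ + ‖star y ⬝ᵥ x‖ := norm_sub_le _ _
    _ ≤ l2 y * l2 (M.mulVec x) + l2 y * l2 x :=
        add_le_add (norm_dot_le _ _) (norm_dot_le _ _)
    _ ≤ l2 y * (Real.sqrt (∑ i, ∑ j, ‖M i j‖ ^ 2) * l2 x) + l2 y * l2 x := by
        gcongr; exacts [l2_nonneg _, l2_mulVec_le M x]
    _ = (Real.sqrt (∑ i, ∑ j, ‖M i j‖ ^ 2) + 1) * l2 x * l2 y := by ring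

lemma theta_spec (s : ℕ) (M : Matrix ι ι 𝕜) {J : Finset ι} (hJ : J.card ≤ s)
    (x y : ι → 𝕜) (hx : ∀ i, x i ≠ 0 → i ∈ J) (hy : ∀ i, y i ≠ 0 → i ∈ J) :
    ‖star y ⬝ᵥ M.mulVec x - star y ⬝ᵥ x‖ ≤ theta s M * l2 x * l2 y := by
  rw [mul_assoc]
  exact le_sInf_mul (theta_set_nonempty s M)
    (mul_nonneg (l2_nonneg x) (l2_nonneg y))
    (fun δ hδ => by rw [← mul_assoc]; exact hδ.2 J hJ x y hx hy)

lemma ric_nonneg (s : ℕ) (Ψ : Matrix ι κ 𝕜) : 0 ≤ ric s Ψ :=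
  Real.sInf_nonneg fun _ hδ => hδ.1

lemma ric_set_nonempty (s : ℕ) (Ψ : Matrix ι κ 𝕜) :
    {δ : ℝ | 0 ≤ δ ∧ ∀ x : κ → 𝕜, Sparse s x →
      (1 - δ) * l2 x ^ 2 ≤ l2 (Ψ.mulVec x) ^ 2 ∧
        l2 (Ψ.mulVec x) ^ 2 ≤ (1 + δ) * l2 x ^ 2}.Nonempty := by
  refine ⟨(∑ i, ∑ j, ‖Ψ i j‖ ^ 2) + 1, by positivity, ?_⟩
  intro x _
  have hF : (0:ℝ) ≤ ∑ i, ∑ j, ‖Ψ i j‖ ^ 2 := by positivity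
  constructor
  · have : (1 - ((∑ i, ∑ j, ‖Ψ i j‖ ^ 2) + 1)) * l2 x ^ 2 ≤ 0 :=
      mul_nonpos_of_nonpos_of_nonneg (by linarith) (sq_nonneg _)
    exact this.trans (sq_nonneg _)
  · have h1 := l2_mulVec_le Ψ x
    have h2 : l2 (Ψ.mulVec x) ^ 2 ≤ (∑ i, ∑ j, ‖Ψ i j‖ ^ 2) * l2 x ^ 2 := by
      have := Real.sq_sqrt hF
      nlinarith [l2_nonneg (Ψ.mulVec x), l2_nonneg x, Real.sqrt_nonneg (∑ i, ∑ j, ‖Ψ i j‖ ^ 2)]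
    nlinarith [sq_nonneg (l2 x)]

lemma ric_spec_upper (s : ℕ) (Ψ : Matrix ι κ 𝕜) (x : κ → 𝕜) (hx : Sparse s x) :
    l2 (Ψ.mulVec x) ^ 2 ≤ (1 + ric s Ψ) * l2 x ^ 2 := by
  have key : l2 (Ψ.mulVec x) ^ 2 - l2 x ^ 2 ≤ ric s Ψ * l2 x ^ 2 :=
    le_sInf_mul (ric_set_nonempty s Ψ) (sq_nonneg _)
      (fun δ hδ => by have := (hδ.2 x hx).2; nlinarith)
  nlinarith

/-! ### dot product expansions -/

lemma dot_conjTranspose (A : Matrix κ ι 𝕜) (w : ι → 𝕜) (u : κ → 𝕜) :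
    star w ⬝ᵥ Aᴴ.mulVec u = star (A.mulVec w) ⬝ᵥ u := by
  simp only [dotProduct, Matrix.mulVec, Matrix.conjTranspose_apply, Pi.star_apply,
    dotProduct, star_sum, star_mul', Finset.sum_mul, Finset.mul_sum]
  rw [Finset.sum_comm]
  exact Finset.sum_congr rfl fun j _ => Finset.sum_congr rfl fun i _ => by ring

lemma dot_mulVec_expand (A : Matrix κ ι 𝕜) (w : ι → 𝕜) (r : κ → 𝕜) :
    star (A.mulVec w) ⬝ᵥ r = ∑ j, star (w j) * (star (col A j) ⬝ᵥ r) := by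
  simp only [dotProduct, Matrix.mulVec, dotProduct, Pi.star_apply, star_sum, star_mul',
    Finset.sum_mul, Finset.mul_sum, col]
  rw [Finset.sum_comm]
  exact Finset.sum_congr rfl fun j _ => Finset.sum_congr rfl fun i _ => by ring

/-! ### counting lemma -/

lemma sum_le_sum_of_card_le {ι' : Type*} [DecidableEq ι'] {A B : Finset ι'} (f : ι' → ℝ)
    (hf : ∀ i, 0 ≤ f i) (hcard : B.card ≤ A.card)
    (h : ∀ b ∈ B, ∀ a ∈ A, f b ≤ f a) :
    ∑ i ∈ B, f i ≤ ∑ i ∈ A, f i := by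
  rcases A.eq_empty_or_nonempty with hA | hA
  · subst hA
    simp only [Finset.card_empty, Nat.le_zero, Finset.card_eq_zero] at hcard
    simp [hcard]
  · obtain ⟨a₀, ha₀, hmin⟩ := Finset.exists_min_image A f hA
    calc ∑ i ∈ B, f i ≤ ∑ _i ∈ B, f a₀ :=
          Finset.sum_le_sum fun b hb => h b hb a₀ ha₀
      _ = B.card * f a₀ := by simp [Finset.sum_const, nsmul_eq_mul]
      _ ≤ A.card * f a₀ := by
          have := hf a₀
          exact mul_le_mul_of_nonneg_right (by exact_mod_cast hcard) this
      _ = ∑ _i ∈ A, f a₀ := by simp [Finset.sum_const, nsmul_eq_mul]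
      _ ≤ ∑ i ∈ A, f i := Finset.sum_le_sum fun a ha => hmin a ha

lemma l2_proj_sq {ι' : Type*} [Fintype ι'] [DecidableEq ι'] (J : Finset ι') (x : ι' → 𝕜) :
    l2 (proj J x) ^ 2 = ∑ i ∈ J, ‖x i‖ ^ 2 := by
  rw [l2_sq]
  calc ∑ i, ‖proj J x i‖ ^ 2 = ∑ i, if i ∈ J then ‖x i‖ ^ 2 else 0 :=
        Finset.sum_congr rfl fun i _ => by by_cases h : i ∈ J <;> simp [proj, h]
    _ = ∑ i ∈ J, ‖x i‖ ^ 2 := by rw [Finset.sum_ite_mem, Finset.univ_inter]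

end Aux

/-- Oblique Subspace Pursuit, Step 2. -/
theorem statement11 (m n s : ℕ) (Ψ Ψt : Matrix (Fin m) (Fin n) 𝕜)
    (xstar : Fin n → 𝕜) (Jstar : Finset (Fin n))
    (hsupp : ∀ i, xstar i ≠ 0 ↔ i ∈ Jstar) (hcard : Jstar.card ≤ s)
    (z y : Fin m → 𝕜) (hy : y = Ψ.mulVec xstar + z)
    (Jtil : Finset (Fin n)) (hJtil1 : s ≤ Jtil.card) (hJtil2 : Jtil.card ≤ 2 * s)
    (θ : ℝ) (hθdef : θ = theta (3 * s) (Ψtᴴ * Ψ)) (hθ : θ < 1)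
    (xtil : Fin n → 𝕜) (hxtilsupp : ∀ i, xtil i ≠ 0 → i ∈ Jtil)
    (hxtilorth : ∀ j ∈ Jtil, star (col Ψt j) ⬝ᵥ (y - Ψ.mulVec xtil) = 0)
    (J₁ : Finset (Fin n)) (hJ₁sub : J₁ ⊆ Jtil) (hJ₁ : J₁.card = s)
    (hsel : ∀ j ∈ J₁, ∀ l ∈ Jtil \ J₁, ‖xtil l‖ ≤ ‖xtil j‖) :
    l2 (proj (Jstar \ J₁) xstar) ≤
      (1 + θ) / (1 - θ) * l2 (proj (Jstar \ Jtil) xstar) +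
        2 * Real.sqrt (1 + ric (2 * s) Ψt) / (1 - θ) * l2 z := by
  classical
  have hθ0 : 0 ≤ θ := hθdef ▸ theta_nonneg _ _
  have h1θ : 0 < 1 - θ := by linarith
  have hδ0 : 0 ≤ ric (2 * s) Ψt := ric_nonneg _ _
  set C : ℝ := Real.sqrt (1 + ric (2 * s) Ψt) with hC
  have hC0 : 0 ≤ C := Real.sqrt_nonneg _
  set d : Fin n → 𝕜 := xstar - xtil with hd
  set w : Fin n → 𝕜 := proj Jtil d with hw
  set u : Fin n → 𝕜 := proj (Jstar \ Jtil) xstar with hu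
  set W : ℝ := l2 w with hW
  set U : ℝ := l2 u with hU
  set Z : ℝ := l2 z with hZ
  have hW0 : 0 ≤ W := l2_nonneg _
  have hU0 : 0 ≤ U := l2_nonneg _
  have hZ0 : 0 ≤ Z := l2_nonneg _
  have hwsupp : ∀ i, w i ≠ 0 → i ∈ Jtil := by
    intro i hi; by_contra h; exact hi (by simp [hw, proj, h])
  have husupp : ∀ i, u i ≠ 0 → i ∈ Jstar \ Jtil := by
    intro i hi; by_contra h; exact hi (by simp [hu, proj, h])
  have hdu : d = w + u := by
    funext i
    by_cases hi : i ∈ Jtil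
    · have h2 : u i = 0 := by simp [hu, proj, Finset.mem_sdiff, hi]
      simp [hw, proj, hi, h2]
    · have hx0 : xtil i = 0 := by by_contra h; exact hi (hxtilsupp i h)
      by_cases hj : i ∈ Jstar
      · simp [hw, hu, proj, hi, hj, hd, hx0, Pi.sub_apply]
      · have h3 : xstar i = 0 := by by_contra h; exact hj ((hsupp i).1 h)
        simp [hw, hu, proj, hi, hj, hd, h3, hx0, Pi.sub_apply]
  -- Step A : (1 - θ) * W ≤ θ * U + C * Z
  have hA : (1 - θ) * W ≤ θ * U + C * Z := by
    have horth : star (Ψt.mulVec w) ⬝ᵥ (y - Ψ.mulVec xtil) = 0 := by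
      rw [dot_mulVec_expand]
      refine Finset.sum_eq_zero fun j _ => ?_
      by_cases hj : j ∈ Jtil
      · rw [hxtilorth j hj, mul_zero]
      · have h0 : w j = 0 := by simp [hw, proj, hj]
        simp [h0]
    have hΨd : Ψ.mulVec d = (y - Ψ.mulVec xtil) - z := by
      rw [hd, Matrix.mulVec_sub, hy]; abel
    have hF1 : star w ⬝ᵥ (Ψtᴴ * Ψ).mulVec d = -(star (Ψt.mulVec w) ⬝ᵥ z) := by
      rw [← Matrix.mulVec_mulVec, dot_conjTranspose, hΨd, dotProduct_sub, horth, zero_sub]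
    have hsw : Sparse (2 * s) w := ⟨Jtil, hJtil2, hwsupp⟩
    have hΨtw : l2 (Ψt.mulVec w) ≤ C * W := by
      have h2 := ric_spec_upper (2 * s) Ψt w hsw
      rw [← Real.sqrt_sq (l2_nonneg (Ψt.mulVec w))]
      calc Real.sqrt (l2 (Ψt.mulVec w) ^ 2) ≤ Real.sqrt ((1 + ric (2 * s) Ψt) * W ^ 2) :=
            Real.sqrt_le_sqrt h2
        _ = C * W := by rw [Real.sqrt_mul (by linarith), Real.sqrt_sq hW0, hC]
    have hF2 : ‖star (Ψt.mulVec w) ⬝ᵥ z‖ ≤ C * W * Z := by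
      calc ‖star (Ψt.mulVec w) ⬝ᵥ z‖ ≤ l2 (Ψt.mulVec w) * Z := norm_dot_le z (Ψt.mulVec w)
        _ ≤ C * W * Z := mul_le_mul_of_nonneg_right hΨtw hZ0
    have hF3 : ‖star w ⬝ᵥ (Ψtᴴ * Ψ).mulVec w - star w ⬝ᵥ w‖ ≤ θ * W * W := by
      rw [hθdef]
      exact theta_spec (3 * s) (Ψtᴴ * Ψ) (J := Jtil) (le_trans hJtil2 (by omega))
        w w hwsupp hwsupp
    have hF4 : ‖star w ⬝ᵥ (Ψtᴴ * Ψ).mulVec u - star w ⬝ᵥ u‖ ≤ θ * U * W := by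
      rw [hθdef]
      refine theta_spec (3 * s) (Ψtᴴ * Ψ) (J := Jtil ∪ (Jstar \ Jtil)) ?_ u w
        (fun i hi => Finset.mem_union_right _ (husupp i hi))
        (fun i hi => Finset.mem_union_left _ (hwsupp i hi))
      calc (Jtil ∪ (Jstar \ Jtil)).card ≤ Jtil.card + (Jstar \ Jtil).card :=
            Finset.card_union_le _ _
        _ ≤ 2 * s + s := add_le_add hJtil2
            (le_trans (Finset.card_le_card Finset.sdiff_subset) hcard)
        _ ≤ 3 * s := by omega
    have hF5 : star w ⬝ᵥ u = 0 := by
      simp only [dotProduct, Pi.star_apply]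
      refine Finset.sum_eq_zero fun i _ => ?_
      by_cases hi : i ∈ Jtil
      · have h2 : u i = 0 := by simp [hu, proj, Finset.mem_sdiff, hi]
        simp [h2]
      · have h2 : w i = 0 := by simp [hw, proj, hi]
        simp [h2]
    have hF6 : ‖star w ⬝ᵥ w‖ = W ^ 2 := norm_dot_self w
    have hMd : (Ψtᴴ * Ψ).mulVec d = (Ψtᴴ * Ψ).mulVec w + (Ψtᴴ * Ψ).mulVec u := by
      rw [hdu, Matrix.mulVec_add]
    have e1 : star w ⬝ᵥ (Ψtᴴ * Ψ).mulVec w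
        = star w ⬝ᵥ (Ψtᴴ * Ψ).mulVec d - star w ⬝ᵥ (Ψtᴴ * Ψ).mulVec u := by
      rw [hMd, dotProduct_add]; ring
    have key : W ^ 2 ≤ θ * W * W + (C * W * Z + θ * U * W) := by
      calc W ^ 2 = ‖star w ⬝ᵥ w‖ := hF6.symm
        _ ≤ ‖star w ⬝ᵥ w - star w ⬝ᵥ (Ψtᴴ * Ψ).mulVec w‖
            + ‖star w ⬝ᵥ (Ψtᴴ * Ψ).mulVec w‖ := by
            have h2 := norm_add_le (star w ⬝ᵥ w - star w ⬝ᵥ (Ψtᴴ * Ψ).mulVec w)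
              (star w ⬝ᵥ (Ψtᴴ * Ψ).mulVec w)
            simpa using h2
        _ ≤ θ * W * W + ‖star w ⬝ᵥ (Ψtᴴ * Ψ).mulVec w‖ := by
            have h2 := hF3; rw [norm_sub_rev] at h2; linarith
        _ ≤ θ * W * W + (‖star w ⬝ᵥ (Ψtᴴ * Ψ).mulVec d‖
            + ‖star w ⬝ᵥ (Ψtᴴ * Ψ).mulVec u‖) := by
            have h2 := norm_sub_le (star w ⬝ᵥ (Ψtᴴ * Ψ).mulVec d)
              (star w ⬝ᵥ (Ψtᴴ * Ψ).mulVec u)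
            rw [← e1] at h2; linarith
        _ ≤ θ * W * W + (C * W * Z + θ * U * W) := by
            have h1 : ‖star w ⬝ᵥ (Ψtᴴ * Ψ).mulVec d‖ ≤ C * W * Z := by
              rw [hF1, norm_neg]; exact hF2
            have h2 : ‖star w ⬝ᵥ (Ψtᴴ * Ψ).mulVec u‖ ≤ θ * U * W := by
              have h3 := hF4; rw [hF5, sub_zero] at h3; exact h3
            linarith
    rcases hW0.eq_or_lt with h0 | h0
    · rw [← h0]; have : (0:ℝ) ≤ θ * U + C * Z := by positivity
      simpa using this
    · nlinarith [key, h0]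
  -- Step B : l2 (proj (Jstar \ J₁) xstar) ≤ U + 2 * W
  have hB : l2 (proj (Jstar \ J₁) xstar) ≤ U + 2 * W := by
    have hsplit : proj (Jstar \ J₁) xstar = proj ((Jstar ∩ Jtil) \ J₁) xstar + u := by
      funext i
      by_cases h1 : i ∈ Jstar
      · by_cases h2 : i ∈ Jtil
        · by_cases h3 : i ∈ J₁ <;>
            simp [proj, hu, Finset.mem_sdiff, Finset.mem_inter, h1, h2, h3]
        · have h3 : i ∉ J₁ := fun h => h2 (hJ₁sub h)
          simp [proj, hu, Finset.mem_sdiff, Finset.mem_inter, h1, h2, h3]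
      · simp [proj, hu, Finset.mem_sdiff, Finset.mem_inter, h1]
    have t1 : proj ((Jstar ∩ Jtil) \ J₁) xstar
        = proj ((Jstar ∩ Jtil) \ J₁) d + proj ((Jstar ∩ Jtil) \ J₁) xtil := by
      funext i
      by_cases h : i ∈ (Jstar ∩ Jtil) \ J₁ <;> simp [proj, h, hd, Pi.sub_apply]
    have t2 : l2 (proj ((Jstar ∩ Jtil) \ J₁) d) ≤ W := by
      apply l2_mono; intro i
      by_cases h : i ∈ (Jstar ∩ Jtil) \ J₁
      · have hi : i ∈ Jtil := (Finset.mem_inter.1 (Finset.mem_sdiff.1 h).1).2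
        simp [proj, h, hw, hi]
      · simp [proj, h, norm_nonneg]
    have t3 : l2 (proj ((Jstar ∩ Jtil) \ J₁) xtil) ≤ l2 (proj (J₁ \ Jstar) xtil) := by
      rw [← Real.sqrt_sq (l2_nonneg (proj ((Jstar ∩ Jtil) \ J₁) xtil)),
        ← Real.sqrt_sq (l2_nonneg (proj (J₁ \ Jstar) xtil))]
      apply Real.sqrt_le_sqrt
      rw [l2_proj_sq, l2_proj_sq]
      apply sum_le_sum_of_card_le _ (fun i => sq_nonneg _)
      · have e1 : ((Jstar ∩ Jtil) \ J₁) ⊆ Jstar \ J₁ :=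
          Finset.sdiff_subset_sdiff Finset.inter_subset_left (le_refl _)
        have e2 := Finset.card_sdiff_add_card_inter Jstar J₁
        have e3 := Finset.card_sdiff_add_card_inter J₁ Jstar
        have e4 : (Jstar ∩ J₁).card = (J₁ ∩ Jstar).card := by rw [Finset.inter_comm]
        have e5 := Finset.card_le_card e1
        omega
      · intro b hb a ha
        obtain ⟨hb1, hb2⟩ := Finset.mem_sdiff.1 hb
        have hb' : b ∈ Jtil \ J₁ :=
          Finset.mem_sdiff.2 ⟨(Finset.mem_inter.1 hb1).2, hb2⟩
        have ha' : a ∈ J₁ := (Finset.mem_sdiff.1 ha).1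
        exact pow_le_pow_left₀ (norm_nonneg _) (hsel a ha' b hb') 2
    have t4 : l2 (proj (J₁ \ Jstar) xtil) ≤ W := by
      apply l2_mono; intro i
      by_cases h : i ∈ J₁ \ Jstar
      · obtain ⟨h1, h2⟩ := Finset.mem_sdiff.1 h
        have hi : i ∈ Jtil := hJ₁sub h1
        have hx0 : xstar i = 0 := by by_contra hc; exact h2 ((hsupp i).1 hc)
        have hni : ‖xtil i‖ = ‖w i‖ := by
          simp [hw, proj, hi, hd, Pi.sub_apply, hx0]
        calc ‖proj (J₁ \ Jstar) xtil i‖ = ‖xtil i‖ := by simp [proj, h]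
          _ ≤ ‖w i‖ := le_of_eq hni
      · simp [proj, h, norm_nonneg]
    have s1 : l2 (proj (Jstar \ J₁) xstar) ≤ l2 (proj ((Jstar ∩ Jtil) \ J₁) xstar) + U := by
      rw [hsplit]; exact l2_add_le _ _
    have s2 : l2 (proj ((Jstar ∩ Jtil) \ J₁) xstar)
        ≤ l2 (proj ((Jstar ∩ Jtil) \ J₁) d) + l2 (proj ((Jstar ∩ Jtil) \ J₁) xtil) := by
      rw [t1]; exact l2_add_le _ _
    have := t3.trans t4
    linarith
  -- combine
  rw [div_mul_eq_mul_div, div_mul_eq_mul_div, ← add_div, le_div_iff₀ h1θ]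
  nlinarith [mul_le_mul_of_nonneg_right hB (le_of_lt h1θ), hA]
end ObliquePursuit
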